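/- The max-distance rule is strictly faster than any fixed sampling rule: let f : ℝ^n → ℝ be μ-strongly convex, x ∈ ℝ^n, x_* ∈ ∂f(x), A x̄ = b, and p ∈ Δ_q^† with q ≥ 2; set η := 1/(max_{l} Σ_{j≠l} p_j). Assume (i) g_j(x) = 0 for some index j; (ii) a spectral bound: σ > 0 with Σ_i p_i·vᵀ Z_i v ≥ σ‖v‖² for all v ∉ Null(A); (iii) an error bound: γ > 0 with γ·D_f^{x_*}(x, x̄) ≤ ‖Ax − b‖²; (iv) i* maximizes g_i(x) over i, and x̂ satisfies S_{i*}ᵀ A x̂ = S_{i*}ᵀ b with x̂_* ∈ ∂f(x̂) satisfying D_f^{x̂_*}(x̂, y) ≤ D_f^{x_*}(x, y) − D_f^{x_*}(x, x̂) for all y with S_{i*}ᵀ A y = S_{i*}ᵀ b. Then D_f^{x̂_*}(x̂, x̄) ≤ (1 − ημγσ/(2‖A‖²))·D_f^{x_*}(x, x̄), where ‖A‖ is the spectral norm of A (assume A ≠ 0), and η > 1. -/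

import Mathlib

open Matrix

/-- The spectral norm (ℓ²→ℓ² operator norm) of a real matrix. -/
noncomputable def specNorm {m n : ℕ} (A : Matrix (Fin m) (Fin n) ℝ) : ℝ :=
  ‖LinearMap.toContinuousLinearMap (Matrix.toEuclideanLin A)‖

/-- Maximum of a real-valued function over a finite nonempty index type. -/
noncomputable def fmax {ι : Type*} [Fintype ι] [Nonempty ι] (v : ι → ℝ) : ℝ :=
  Finset.univ.sup' Finset.univ_nonempty v

/-- `x_*` is a subgradient of `f` at `x`. -/
def IsSubgrad {n : ℕ} (f : (Fin n → ℝ) → ℝ) (x xs : Fin n → ℝ) : Prop :=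
  ∀ u : Fin n → ℝ, f u ≥ f x + xs ⬝ᵥ (u - x)

/-- `f` is μ-strongly convex (w.r.t. the Euclidean norm, ‖v‖² = v ⬝ᵥ v). -/
def StronglyConvexWith {n : ℕ} (μ : ℝ) (f : (Fin n → ℝ) → ℝ) : Prop :=
  ∀ x y xs : Fin n → ℝ, IsSubgrad f x xs →
    f y ≥ f x + xs ⬝ᵥ (y - x) + μ / 2 * ((y - x) ⬝ᵥ (y - x))

/-- Bregman distance D_f^{x_*}(x, y) := f(y) − f(x) − ⟨x_*, y − x⟩. -/
noncomputable def breg {n : ℕ} (f : (Fin n → ℝ) → ℝ) (xs x y : Fin n → ℝ) : ℝ :=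
  f y - f x - xs ⬝ᵥ (y - x)

lemma aux_dot_self_nonneg {k : ℕ} (v : Fin k → ℝ) : 0 ≤ v ⬝ᵥ v :=
  Finset.sum_nonneg fun i _ => mul_self_nonneg _

lemma aux_cs {k : ℕ} (u v : Fin k → ℝ) : (u ⬝ᵥ v) ^ 2 ≤ (u ⬝ᵥ u) * (v ⬝ᵥ v) := by
  simpa [dotProduct, pow_two] using Finset.sum_mul_sq_le_sq_mul_sq Finset.univ u v

lemma aux_dot_transfer {a b : ℕ} (M : Matrix (Fin a) (Fin b) ℝ) (u : Fin a → ℝ) (v : Fin b → ℝ) :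
    u ⬝ᵥ M.mulVec v = Mᵀ.mulVec u ⬝ᵥ v := by
  rw [Matrix.dotProduct_mulVec, Matrix.mulVec_transpose]

lemma aux_quad {m n : ℕ} (A : Matrix (Fin m) (Fin n) ℝ) (H : Matrix (Fin m) (Fin m) ℝ)
    (v : Fin n → ℝ) :
    v ⬝ᵥ (Aᵀ * H * A).mulVec v = A.mulVec v ⬝ᵥ H.mulVec (A.mulVec v) := by
  rw [← Matrix.mulVec_mulVec, ← Matrix.mulVec_mulVec, aux_dot_transfer, Matrix.transpose_transpose]

lemma aux_norm_sq {k : ℕ} (w : Fin k → ℝ) :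
    ‖(WithLp.equiv 2 (Fin k → ℝ)).symm w‖ ^ 2 = w ⬝ᵥ w := by
  rw [EuclideanSpace.norm_eq, Real.sq_sqrt (Finset.sum_nonneg fun i _ => sq_nonneg _)]
  simp [dotProduct, pow_two, Real.norm_eq_abs, abs_mul_abs_self]

lemma aux_opnorm {m n : ℕ} (A : Matrix (Fin m) (Fin n) ℝ) (v : Fin n → ℝ) :
    A.mulVec v ⬝ᵥ A.mulVec v ≤ specNorm A ^ 2 * (v ⬝ᵥ v) := by
  have h := (LinearMap.toContinuousLinearMap (Matrix.toEuclideanLin A)).le_opNorm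
      ((WithLp.equiv 2 (Fin n → ℝ)).symm v)
  have hL : (LinearMap.toContinuousLinearMap (Matrix.toEuclideanLin A))
      ((WithLp.equiv 2 (Fin n → ℝ)).symm v) = (WithLp.equiv 2 (Fin m → ℝ)).symm (A.mulVec v) := by
    simp [Matrix.toEuclideanLin_apply_piLp_toLp]
  have h2 := pow_le_pow_left₀ (norm_nonneg _) h 2
  rw [hL, aux_norm_sq, mul_pow, aux_norm_sq] at h2
  exact h2

lemma aux_specNorm_pos {m n : ℕ} (A : Matrix (Fin m) (Fin n) ℝ) (hA : A ≠ 0) :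
    0 < specNorm A := by
  rw [specNorm, norm_pos_iff]
  intro h
  apply hA
  have h2 : Matrix.toEuclideanLin A = 0 := by
    apply LinearMap.ext
    intro v
    have := congrFun (congrArg DFunLike.coe h) v
    simpa using this
  exact (LinearEquiv.map_eq_zero_iff _).mp h2

lemma aux_dist_le {m n τ : ℕ} (A : Matrix (Fin m) (Fin n) ℝ) (S : Matrix (Fin m) (Fin τ) ℝ)
    (W : Matrix (Fin τ) (Fin τ) ℝ) (hWsym : Wᵀ = W)
    (hWMW : W * (Sᵀ * A * Aᵀ * S) * W = W)
    (b : Fin m → ℝ) (x xhat : Fin n → ℝ)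
    (hxhat : (Sᵀ * A).mulVec xhat = Sᵀ.mulVec b) :
    (A.mulVec x - b) ⬝ᵥ (S * W * Sᵀ).mulVec (A.mulVec x - b) ≤ (xhat - x) ⬝ᵥ (xhat - x) := by
  set r := A.mulVec x - b with hr
  set c := Sᵀ.mulVec r with hc
  set d := xhat - x with hd
  set M := Aᵀ * S * W with hM
  set e := M.mulVec c with he
  have hMt : Mᵀ * M = W := by
    calc Mᵀ * M = W * (Sᵀ * A * Aᵀ * S) * W := by
          rw [hM]
          simp [Matrix.transpose_mul, hWsym, Matrix.mul_assoc]
      _ = W := hWMW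
  have hLHS : r ⬝ᵥ (S * W * Sᵀ).mulVec r = c ⬝ᵥ W.mulVec c := by
    rw [← Matrix.mulVec_mulVec, ← Matrix.mulVec_mulVec, aux_dot_transfer, ← hc]
  have hee : e ⬝ᵥ e = c ⬝ᵥ W.mulVec c := by
    calc e ⬝ᵥ e = e ⬝ᵥ M.mulVec c := by rw [← he]
      _ = Mᵀ.mulVec e ⬝ᵥ c := aux_dot_transfer M e c
      _ = (Mᵀ * M).mulVec c ⬝ᵥ c := by rw [he, Matrix.mulVec_mulVec]
      _ = W.mulVec c ⬝ᵥ c := by rw [hMt]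
      _ = c ⬝ᵥ W.mulVec c := dotProduct_comm _ _
  have hSAd : (Sᵀ * A).mulVec d = -c := by
    rw [hd, Matrix.mulVec_sub, hxhat, hc, hr, ← Matrix.mulVec_mulVec, Matrix.mulVec_sub]
    abel
  have hed : e ⬝ᵥ d = -(c ⬝ᵥ W.mulVec c) := by
    calc e ⬝ᵥ d = d ⬝ᵥ M.mulVec c := by rw [he, dotProduct_comm]
      _ = Mᵀ.mulVec d ⬝ᵥ c := aux_dot_transfer M d c
      _ = (W * (Sᵀ * A)).mulVec d ⬝ᵥ c := by
          rw [hM]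
          congr 1
          congr 1
          simp [Matrix.transpose_mul, hWsym, Matrix.mul_assoc]
      _ = W.mulVec ((Sᵀ * A).mulVec d) ⬝ᵥ c := by rw [Matrix.mulVec_mulVec]
      _ = -(W.mulVec c) ⬝ᵥ c := by rw [hSAd, Matrix.mulVec_neg]
      _ = -(c ⬝ᵥ W.mulVec c) := by rw [neg_dotProduct, dotProduct_comm]
  set t := c ⬝ᵥ W.mulVec c with htdef
  have ht0 : 0 ≤ t := hee ▸ aux_dot_self_nonneg e
  have hdd : 0 ≤ d ⬝ᵥ d := aux_dot_self_nonneg d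
  have hcs := aux_cs e d
  rw [hee, hed] at hcs
  rw [hLHS]
  nlinarith [hcs, ht0, hdd]



/-- the max-distance rule is strictly faster than any fixed sampling rule:
D_f^{x̂_*}(x̂, x̄) ≤ (1 − ημγσ/(2‖A‖²))·D_f^{x_*}(x, x̄), with η := 1/(max_l Σ_{j≠l} p_j) > 1. -/
theorem stmt9 {m n τ q : ℕ} [NeZero q] (hq : 2 ≤ q)
    (A : Matrix (Fin m) (Fin n) ℝ) (hA : A ≠ 0)
    (b : Fin m → ℝ) (xbar : Fin n → ℝ) (hxbar : A.mulVec xbar = b)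
    (S : Fin q → Matrix (Fin m) (Fin τ) ℝ) (W : Fin q → Matrix (Fin τ) (Fin τ) ℝ)
    (hWsym : ∀ i, (W i)ᵀ = W i)
    (hMWM : ∀ i, ((S i)ᵀ * A * Aᵀ * S i) * W i * ((S i)ᵀ * A * Aᵀ * S i)
      = (S i)ᵀ * A * Aᵀ * S i)
    (hWMW : ∀ i, W i * ((S i)ᵀ * A * Aᵀ * S i) * W i = W i)
    (hMW : ∀ i, (((S i)ᵀ * A * Aᵀ * S i) * W i)ᵀ = ((S i)ᵀ * A * Aᵀ * S i) * W i)
    (hWM : ∀ i, (W i * ((S i)ᵀ * A * Aᵀ * S i))ᵀ = W i * ((S i)ᵀ * A * Aᵀ * S i))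
    (f : (Fin n → ℝ) → ℝ) (μ : ℝ) (hμ : 0 < μ) (hf : StronglyConvexWith μ f)
    (x xs : Fin n → ℝ) (hxs : IsSubgrad f x xs)
    (p : Fin q → ℝ) (hp : ∀ i, 0 < p i) (hp1 : ∑ i, p i = 1)
    (j₀ : Fin q)
    (hj₀ : (A.mulVec x - b) ⬝ᵥ (S j₀ * W j₀ * (S j₀)ᵀ).mulVec (A.mulVec x - b) = 0)
    (σ : ℝ) (hσ : 0 < σ)
    (hspec : ∀ v : Fin n → ℝ, A.mulVec v ≠ 0 →
      σ * (v ⬝ᵥ v) ≤ ∑ i, p i * (v ⬝ᵥ (Aᵀ * (S i * W i * (S i)ᵀ) * A).mulVec v))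
    (γ : ℝ) (hγ : 0 < γ)
    (herr : γ * breg f xs x xbar ≤ (A.mulVec x - b) ⬝ᵥ (A.mulVec x - b))
    (istar : Fin q)
    (hstar : ∀ i, (A.mulVec x - b) ⬝ᵥ (S i * W i * (S i)ᵀ).mulVec (A.mulVec x - b) ≤
      (A.mulVec x - b) ⬝ᵥ (S istar * W istar * (S istar)ᵀ).mulVec (A.mulVec x - b))
    (xhat xhs : Fin n → ℝ)
    (hxhatL : ((S istar)ᵀ * A).mulVec xhat = (S istar)ᵀ.mulVec b)
    (hxhs : IsSubgrad f xhat xhs)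
    (hadm : ∀ y : Fin n → ℝ, ((S istar)ᵀ * A).mulVec y = (S istar)ᵀ.mulVec b →
      breg f xhs xhat y ≤ breg f xs x y - breg f xs x xhat) :
    breg f xhs xhat xbar ≤
      (1 - (1 / fmax (fun l => ∑ j ∈ Finset.univ.erase l, p j)) * μ * γ * σ /
        (2 * (specNorm A) ^ 2)) * breg f xs x xbar ∧
    1 < 1 / fmax (fun l => ∑ j ∈ Finset.univ.erase l, p j) := by
  -- notation
  set F := fmax (fun l => ∑ j ∈ Finset.univ.erase l, p j) with hFdef
  -- F bounds
  have hF1 : F < 1 := by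
    rw [hFdef, fmax, Finset.sup'_lt_iff]
    intro l _
    have h := Finset.sum_erase_add Finset.univ p (Finset.mem_univ l)
    rw [hp1] at h
    linarith [hp l]
  have hF0 : 0 < F := by
    have hne : (Finset.univ.erase j₀).Nonempty := by
      rw [← Finset.card_pos, Finset.card_erase_of_mem (Finset.mem_univ j₀)]
      simp only [Finset.card_univ, Fintype.card_fin]
      omega
    have h1 : 0 < ∑ j ∈ Finset.univ.erase j₀, p j :=
      Finset.sum_pos (fun i _ => hp i) hne
    refine lt_of_lt_of_le h1 ?_
    rw [hFdef, fmax]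
    exact Finset.le_sup' (fun l => ∑ j ∈ Finset.univ.erase l, p j) (Finset.mem_univ j₀)
  have hη : 1 < 1 / F := one_lt_one_div hF0 hF1
  refine ⟨?_, hη⟩
  -- basic quantities
  set r := A.mulVec x - b with hr
  have hD0 : 0 ≤ breg f xs x xbar := by
    have := hxs xbar
    rw [breg]
    linarith
  have hBx0 : 0 ≤ breg f xs x xhat := by
    have := hxs xhat
    rw [breg]
    linarith
  have hN2 : 0 < specNorm A ^ 2 := pow_pos (aux_specNorm_pos A hA) 2
  have hxbar_adm : ((S istar)ᵀ * A).mulVec xbar = (S istar)ᵀ.mulVec b := by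
    rw [← Matrix.mulVec_mulVec, hxbar]
  have key := hadm xbar hxbar_adm
  by_cases hrz : r = 0
  · -- degenerate case: D = 0
    have hrr : r ⬝ᵥ r = 0 := by rw [hrz]; simp
    have hDle : γ * breg f xs x xbar ≤ 0 := by rw [← hrr]; exact herr
    have hDeq : breg f xs x xbar = 0 := le_antisymm (by nlinarith) hD0
    rw [hDeq, mul_zero]
    linarith [key, hBx0, hDeq]
  · -- main case
    set g : Fin q → ℝ := fun i => r ⬝ᵥ (S i * W i * (S i)ᵀ).mulVec r with hgdef
    have hgj₀ : g j₀ = 0 := hj₀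
    have hgstar0 : 0 ≤ g istar := by
      have h := hstar j₀
      calc (0:ℝ) = g j₀ := hgj₀.symm
        _ ≤ g istar := h
    have hAv : A.mulVec (x - xbar) = r := by
      rw [Matrix.mulVec_sub, hxbar, hr]
    set v := x - xbar with hv
    have hAvne : A.mulVec v ≠ 0 := by rw [hAv]; exact hrz
    -- spectral bound in terms of g
    have hsum : σ * (v ⬝ᵥ v) ≤ ∑ i, p i * g i := by
      have h := hspec v hAvne
      have heq : ∀ i : Fin q, v ⬝ᵥ (Aᵀ * (S i * W i * (S i)ᵀ) * A).mulVec v = g i := by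
        intro i
        rw [aux_quad, hAv]
      calc σ * (v ⬝ᵥ v) ≤ ∑ i, p i * (v ⬝ᵥ (Aᵀ * (S i * W i * (S i)ᵀ) * A).mulVec v) := h
        _ = ∑ i, p i * g i := by
            apply Finset.sum_congr rfl
            intro i _
            rw [heq]
    -- max bound
    have hgmax : ∑ i, p i * g i ≤ F * g istar := by
      have h1 : ∑ i, p i * g i = ∑ i ∈ Finset.univ.erase j₀, p i * g i := by
        rw [← Finset.sum_erase_add Finset.univ _ (Finset.mem_univ j₀), hgj₀, mul_zero, add_zero]
      have h2 : ∑ i ∈ Finset.univ.erase j₀, p i * g i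
          ≤ ∑ i ∈ Finset.univ.erase j₀, p i * g istar := by
        apply Finset.sum_le_sum
        intro i _
        exact mul_le_mul_of_nonneg_left (hstar i) (hp i).le
      have h3 : ∑ i ∈ Finset.univ.erase j₀, p i * g istar
          = (∑ i ∈ Finset.univ.erase j₀, p i) * g istar := by
        rw [Finset.sum_mul]
      have h4 : (∑ i ∈ Finset.univ.erase j₀, p i) ≤ F := by
        rw [hFdef, fmax]
        exact Finset.le_sup' (fun l => ∑ j ∈ Finset.univ.erase l, p j) (Finset.mem_univ j₀)
      calc ∑ i, p i * g i = ∑ i ∈ Finset.univ.erase j₀, p i * g i := h1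
        _ ≤ ∑ i ∈ Finset.univ.erase j₀, p i * g istar := h2
        _ = (∑ i ∈ Finset.univ.erase j₀, p i) * g istar := h3
        _ ≤ F * g istar := mul_le_mul_of_nonneg_right h4 hgstar0
    -- distance bound
    have hdist : g istar ≤ (xhat - x) ⬝ᵥ (xhat - x) := by
      exact aux_dist_le A (S istar) (W istar) (hWsym istar) (hWMW istar) b x xhat hxhatL
    -- strong convexity
    have hsc : μ / 2 * ((xhat - x) ⬝ᵥ (xhat - x)) ≤ breg f xs x xhat := by
      have := hf x xhat xs hxs
      rw [breg]
      linarith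
    -- operator norm bound
    have hop : r ⬝ᵥ r ≤ specNorm A ^ 2 * (v ⬝ᵥ v) := by
      rw [← hAv]
      exact aux_opnorm A v
    -- error bound
    have herr' : γ * breg f xs x xbar ≤ r ⬝ᵥ r := herr
    -- assemble: breg f xs x xhat ≥ c * breg f xs x xbar where c = (1/F)*μ*γ*σ/(2*N2)
    have hvv0 : 0 ≤ v ⬝ᵥ v := aux_dot_self_nonneg v
    have hchain : (1 / F) * μ * γ * σ / (2 * specNorm A ^ 2) * breg f xs x xbar ≤ breg f xs x xhat := by
      have e1 : γ * breg f xs x xbar ≤ specNorm A ^ 2 * (v ⬝ᵥ v) := le_trans herr' hop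
      have e2 : σ * (v ⬝ᵥ v) ≤ F * g istar := le_trans hsum hgmax
      -- g istar ≥ σ * γ * breg f xs x xbar / (F * N2)
      have e3 : σ * (γ * breg f xs x xbar) ≤ σ * (specNorm A ^ 2 * (v ⬝ᵥ v)) :=
        mul_le_mul_of_nonneg_left e1 hσ.le
      have e4 : σ * (γ * breg f xs x xbar) ≤ specNorm A ^ 2 * (F * g istar) := by
        calc σ * (γ * breg f xs x xbar) ≤ σ * (specNorm A ^ 2 * (v ⬝ᵥ v)) := e3
          _ = specNorm A ^ 2 * (σ * (v ⬝ᵥ v)) := by ring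
          _ ≤ specNorm A ^ 2 * (F * g istar) := mul_le_mul_of_nonneg_left e2 hN2.le
      -- so σ*γ*D / (N2 * F) ≤ g istar
      have e5 : σ * γ * breg f xs x xbar / (specNorm A ^ 2 * F) ≤ g istar := by
        rw [div_le_iff₀ (by positivity)]
        nlinarith [e4]
      have e6 : μ / 2 * (σ * γ * breg f xs x xbar / (specNorm A ^ 2 * F)) ≤ μ / 2 * g istar :=
        mul_le_mul_of_nonneg_left e5 (by positivity)
      have e7 : (1 / F) * μ * γ * σ / (2 * specNorm A ^ 2) * breg f xs x xbar
          = μ / 2 * (σ * γ * breg f xs x xbar / (specNorm A ^ 2 * F)) := by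
        field_simp
      rw [e7]
      calc μ / 2 * (σ * γ * breg f xs x xbar / (specNorm A ^ 2 * F)) ≤ μ / 2 * g istar := e6
        _ ≤ μ / 2 * ((xhat - x) ⬝ᵥ (xhat - x)) := mul_le_mul_of_nonneg_left hdist (by positivity)
        _ ≤ breg f xs x xhat := hsc
    -- finish
    have expand : (1 - (1 / F) * μ * γ * σ / (2 * specNorm A ^ 2)) * breg f xs x xbar
        = breg f xs x xbar - (1 / F) * μ * γ * σ / (2 * specNorm A ^ 2) * breg f xs x xbar := by ring
    rw [expand]
    linarith [key, hchain]
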